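/- Subtyping in LSST is transitive: if A ≤ B and B ≤ C, then A ≤ C, where ≤ is LSST subtyping. -/

import Mathlib

/-- Multiplicities. -/
inductive Mult : Type
  | lin
  | un

/-- Subkinding on multiplicities: un ≤ lin, lin ≤ lin, un ≤ un. -/
inductive MSub : Mult → Mult → Prop
  | unLin : MSub .un .lin
  | linLin : MSub .lin .lin
  | unUn : MSub .un .un

mutual
/-- LSST types: A ::= S | Unit | A →_m B | A × B. -/
inductive Ty : Type
  | session (S : STy) : Ty
  | unit : Ty
  | arrow (m : Mult) (A B : Ty) : Ty
  | prod (A B : Ty) : Ty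

/-- LSST session types: S ::= !A.S | ?A.S | ⊕{ℓ:Sℓ} | &{ℓ:Sℓ} | end! | end?.
Branches are given by a finite label set `L` and a branch assignment `f`. -/
inductive STy : Type
  | send (A : Ty) (S : STy) : STy
  | recv (A : Ty) (S : STy) : STy
  | choice (L : Finset String) (f : String → STy) : STy
  | branch (L : Finset String) (f : String → STy) : STy
  | endS : STy
  | endR : STy
end

mutual
/-- LSST subtyping on types. -/
inductive SubT : Ty → Ty → Prop
  | unit : SubT .unit .unit
  | arrow {A A' B B' m n} : SubT A' A → SubT B B' → MSub m n →
      SubT (.arrow m A B) (.arrow n A' B')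
  | prod {A A' B B'} : SubT A A' → SubT B B' →
      SubT (.prod A B) (.prod A' B')
  | session {S S'} : SubS S S' → SubT (.session S) (.session S')

/-- LSST subtyping on session types. -/
inductive SubS : STy → STy → Prop
  | send {A A' S S'} : SubT A' A → SubS S S' → SubS (.send A S) (.send A' S')
  | recv {A A' S S'} : SubT A A' → SubS S S' → SubS (.recv A S) (.recv A' S')
  | choice {L L' : Finset String} {f f'} : L' ⊆ L →
      (∀ ℓ ∈ L', SubS (f ℓ) (f' ℓ)) → SubS (.choice L f) (.choice L' f')
  | branch {L L' : Finset String} {f f'} : L ⊆ L' →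
      (∀ ℓ ∈ L, SubS (f ℓ) (f' ℓ)) → SubS (.branch L f) (.branch L' f')
  | endS : SubS .endS .endS
  | endR : SubS .endR .endR
end



mutual
def depthT : Ty → Nat
  | .session S => depthS S + 1
  | .unit => 0
  | .arrow _ A B => depthT A + depthT B + 1
  | .prod A B => depthT A + depthT B + 1
def depthS : STy → Nat
  | .send A S => depthT A + depthS S + 1
  | .recv A S => depthT A + depthS S + 1
  | .choice L f => (L.sup fun l => depthS (f l)) + 1
  | .branch L f => (L.sup fun l => depthS (f l)) + 1
  | .endS => 0
  | .endR => 0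
end

theorem depth_lt_choice {L : Finset String} {f : String → STy} {l : String}
    (hl : l ∈ L) : depthS (f l) < depthS (.choice L f) :=
  Nat.lt_succ_of_le (Finset.le_sup (f := fun l => depthS (f l)) hl)

theorem depth_lt_branch {L : Finset String} {f : String → STy} {l : String}
    (hl : l ∈ L) : depthS (f l) < depthS (.branch L f) :=
  Nat.lt_succ_of_le (Finset.le_sup (f := fun l => depthS (f l)) hl)

theorem msub_trans {a b c : Mult} (h1 : MSub a b) (h2 : MSub b c) : MSub a c := by
  cases h1 <;> cases h2 <;> constructor

mutual
theorem subT_trans_aux : ∀ B A C : Ty, SubT A B → SubT B C → SubT A C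
  | .unit, _, _, hab, hbc => by
    cases hab; cases hbc; exact .unit
  | .arrow m A0 B0, _, _, hab, hbc => by
    cases hab with
    | arrow h1 h2 h3 =>
      cases hbc with
      | arrow h4 h5 h6 =>
        exact .arrow (subT_trans_aux A0 _ _ h4 h1) (subT_trans_aux B0 _ _ h2 h5)
          (msub_trans h3 h6)
  | .prod A0 B0, _, _, hab, hbc => by
    cases hab with
    | prod h1 h2 =>
      cases hbc with
      | prod h3 h4 =>
        exact .prod (subT_trans_aux A0 _ _ h1 h3) (subT_trans_aux B0 _ _ h2 h4)
  | .session S, _, _, hab, hbc => by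
    cases hab with
    | session h1 =>
      cases hbc with
      | session h2 => exact .session (subS_trans_aux S _ _ h1 h2)
termination_by B _ _ _ _ => depthT B
decreasing_by all_goals simp [depthT, depthS] <;> omega

theorem subS_trans_aux : ∀ B A C : STy, SubS A B → SubS B C → SubS A C
  | .send A0 S0, _, _, hab, hbc => by
    cases hab with
    | send h1 h2 =>
      cases hbc with
      | send h3 h4 =>
        exact .send (subT_trans_aux A0 _ _ h3 h1) (subS_trans_aux S0 _ _ h2 h4)
  | .recv A0 S0, _, _, hab, hbc => by
    cases hab with
    | recv h1 h2 =>
      cases hbc with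
      | recv h3 h4 =>
        exact .recv (subT_trans_aux A0 _ _ h1 h3) (subS_trans_aux S0 _ _ h2 h4)
  | .choice L f, _, _, hab, hbc => by
    cases hab with
    | choice hsub hbr =>
      cases hbc with
      | choice hsub' hbr' =>
        exact .choice (hsub'.trans hsub)
          (fun l hl => subS_trans_aux (f l) _ _ (hbr l (hsub' hl)) (hbr' l hl))
  | .branch L f, _, _, hab, hbc => by
    cases hab with
    | branch hsub hbr =>
      cases hbc with
      | branch hsub' hbr' =>
        exact .branch (hsub.trans hsub')
          (fun l hl => subS_trans_aux (f l) _ _ (hbr l hl) (hbr' l (hsub hl)))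
  | .endS, _, _, hab, hbc => by cases hab; cases hbc; exact .endS
  | .endR, _, _, hab, hbc => by cases hab; cases hbc; exact .endR
termination_by B _ _ _ _ => depthS B
decreasing_by
  all_goals first
    | (simp [depthT, depthS] <;> omega)
    | exact depth_lt_choice (hsub' hl)
    | exact depth_lt_branch (hsub hl)
end

/-- LSST subtyping is transitive: if A ≤ B and B ≤ C then A ≤ C. -/
theorem subT_trans : ∀ A B C : Ty, SubT A B → SubT B C → SubT A C :=
  fun _ B _ h1 h2 => subT_trans_aux B _ _ h1 h2
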